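/- Let a ∈ (-1,0], r₀ > 0, and on the set Ω = {(x,y) : r₀/2 < |x| < r₀, 0 < y < r₀} ⊂ ℝ^{n+1}_+ define W(x,y) = y^{-a}(y + A y²)(e^{-B|x|} - e^{-B r₀}). Then, with respect to the Euclidean metric, div(y^a ∇W) = ((1-a)·0 + (2-a)A)(e^{-B|x|} - e^{-B r₀}) + (B² - (n-1)B/|x|)·y·e^{-B|x|}; in particular, for A sufficiently large and B sufficiently large (depending on n, a, r₀), div(y^a ∇W) ≥ 0 on Ω, i.e. W is a subsolution of the degenerate operator. -/

import Mathlib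

open Set Filter MeasureTheory Real

section AuxLemmas

variable {E : Type*} [NormedAddCommGroup E] [InnerProductSpace ℝ E]

lemma myHasFDerivAt_norm {x : E} (hx : x ≠ 0) :
    HasFDerivAt (fun z : E => ‖z‖) (‖x‖⁻¹ • innerSL ℝ x) x := by
  have h1 : HasFDerivAt (fun z : E => ‖z‖ ^ 2) (2 • (innerSL ℝ x)) x := by
    simpa using (hasFDerivAt_id x).norm_sq
  have hne : ‖x‖ ^ 2 ≠ 0 := pow_ne_zero 2 (norm_ne_zero_iff.mpr hx)
  have h2 := (Real.hasDerivAt_sqrt hne).comp_hasFDerivAt x h1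
  have h4 : (fun z : E => Real.sqrt (‖z‖ ^ 2)) = fun z : E => ‖z‖ :=
    funext fun z => Real.sqrt_sq (norm_nonneg z)
  have h3 : HasFDerivAt (fun z : E => ‖z‖)
      ((1 / (2 * Real.sqrt (‖x‖ ^ 2))) • (2 • innerSL ℝ x)) x := by
    rw [← h4]; exact h2
  convert h3 using 1
  rw [Real.sqrt_sq (norm_nonneg x)]
  ext v
  simp [two_smul]
  ring

lemma myHasFDerivAt_exp_norm (B : ℝ) {x : E} (hx : x ≠ 0) :
    HasFDerivAt (fun z : E => Real.exp (-B * ‖z‖))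
      ((-B * Real.exp (-B * ‖x‖) / ‖x‖) • innerSL ℝ x) x := by
  have h1 := (myHasFDerivAt_norm hx).const_mul (-B)
  have h2 := (Real.hasDerivAt_exp (-B * ‖x‖)).comp_hasFDerivAt x h1
  refine h2.congr_fderiv ?_
  ext v
  simp [smul_smul]
  ring

lemma myInnerFD (n : ℕ) (B c K : ℝ) {z : EuclideanSpace ℝ (Fin n)} (hz : z ≠ 0) (i : Fin n) :
    fderiv ℝ (fun z' : EuclideanSpace ℝ (Fin n) => c * Real.exp (-B * ‖z'‖) - c * K) z
        (EuclideanSpace.single i 1)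
      = c * (-B * Real.exp (-B * ‖z‖) * ‖z‖⁻¹ * z i) := by
  have h := ((myHasFDerivAt_exp_norm B hz).const_mul c).sub_const (c * K)
  rw [h.fderiv]
  simp [EuclideanSpace.inner_single_right, div_eq_mul_inv]

lemma myXpart (n : ℕ) (B c K : ℝ) {x : EuclideanSpace ℝ (Fin n)} (hx : x ≠ 0) (i : Fin n) :
    fderiv ℝ (fun z => fderiv ℝ
        (fun z' : EuclideanSpace ℝ (Fin n) => c * Real.exp (-B * ‖z'‖) - c * K) z
        (EuclideanSpace.single i 1)) x (EuclideanSpace.single i 1)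
      = c * ((B ^ 2 * Real.exp (-B * ‖x‖) * (‖x‖⁻¹) ^ 2
            + B * Real.exp (-B * ‖x‖) * (‖x‖⁻¹) ^ 3) * (x i) ^ 2
          - B * Real.exp (-B * ‖x‖) * ‖x‖⁻¹) := by
  have hrne : ‖x‖ ≠ 0 := norm_ne_zero_iff.mpr hx
  have hev : (fun z => fderiv ℝ
        (fun z' : EuclideanSpace ℝ (Fin n) => c * Real.exp (-B * ‖z'‖) - c * K) z
        (EuclideanSpace.single i 1))
      =ᶠ[nhds x] (fun z => c * (-B * Real.exp (-B * ‖z‖) * ‖z‖⁻¹ * z i)) := by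
    filter_upwards [isOpen_ne.mem_nhds hx] with z hz
    exact myInnerFD n B c K hz i
  rw [hev.fderiv_eq]
  have hnorm := myHasFDerivAt_norm hx
  have hinv : HasFDerivAt (fun z : EuclideanSpace ℝ (Fin n) => ‖z‖⁻¹)
      ((-(‖x‖ ^ 2)⁻¹) • (‖x‖⁻¹ • innerSL ℝ x)) x :=
    (hasDerivAt_inv hrne).comp_hasFDerivAt x hnorm
  have hexp := (myHasFDerivAt_exp_norm B hx).const_mul (-B)
  have hu := hexp.mul hinv
  have hproj : HasFDerivAt (fun z : EuclideanSpace ℝ (Fin n) => z i)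
      ((EuclideanSpace.proj i : EuclideanSpace ℝ (Fin n) →L[ℝ] ℝ)) x :=
    (EuclideanSpace.proj i : EuclideanSpace ℝ (Fin n) →L[ℝ] ℝ).hasFDerivAt
  have hG := (hu.mul hproj).const_mul c
  rw [(show HasFDerivAt (fun z : EuclideanSpace ℝ (Fin n) => c * (-B * Real.exp (-B * ‖z‖) * ‖z‖⁻¹ * z i)) _ x from hG).fderiv]
  simp [EuclideanSpace.inner_single_right, div_eq_mul_inv]
  field_simp
  ring

lemma myYpart (a A C y : ℝ) (hy : 0 < y) :
    deriv (fun t : ℝ => t ^ a * deriv (fun s : ℝ => s ^ (-a) * (s + A * s ^ 2) * C) t) y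
      = (2 - a) * A * C := by
  have hder : ∀ t : ℝ, 0 < t →
      deriv (fun s : ℝ => s ^ (-a) * (s + A * s ^ 2) * C) t
        = ((-a) * t ^ (-a - 1) * (t + A * t ^ 2) + t ^ (-a) * (1 + A * (2 * t))) * C := by
    intro t ht
    have hp : HasDerivAt (fun s : ℝ => s + A * s ^ 2) (1 + A * (2 * t)) t := by
      exact ((hasDerivAt_id' t).add ((hasDerivAt_pow 2 t).const_mul A)).congr_deriv (by norm_num)
    have hr : HasDerivAt (fun s : ℝ => s ^ (-a)) ((-a) * t ^ (-a - 1)) t :=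
      Real.hasDerivAt_rpow_const (Or.inl ht.ne')
    exact ((hr.mul hp).mul_const C).deriv
  have hev : (fun t : ℝ => t ^ a * deriv (fun s : ℝ => s ^ (-a) * (s + A * s ^ 2) * C) t)
      =ᶠ[nhds y] (fun t : ℝ => (1 - a) * C + ((2 - a) * A * C) * t) := by
    filter_upwards [Ioi_mem_nhds hy] with t ht
    rw [hder t ht]
    have h1 : t ^ a * t ^ (-a - 1) = t⁻¹ := by
      rw [← Real.rpow_add ht, show a + (-a - 1) = -1 by ring, Real.rpow_neg_one]
    have h2 : t ^ a * t ^ (-a) = 1 := by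
      rw [← Real.rpow_add ht]; simp
    have expand : t ^ a * (((-a) * t ^ (-a - 1) * (t + A * t ^ 2)
          + t ^ (-a) * (1 + A * (2 * t))) * C)
        = (-a) * (t ^ a * t ^ (-a - 1)) * (t + A * t ^ 2) * C
          + (t ^ a * t ^ (-a)) * (1 + A * (2 * t)) * C := by ring
    rw [expand, h1, h2]
    have htne : t ≠ 0 := (mem_Ioi.mp ht).ne'
    field_simp
    ring
  rw [hev.deriv_eq]
  have : HasDerivAt (fun t : ℝ => (1 - a) * C + ((2 - a) * A * C) * t) ((2 - a) * A * C) y := by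
    simpa using ((hasDerivAt_id y).const_mul ((2 - a) * A * C)).const_add ((1 - a) * C)
  exact this.deriv

end AuxLemmas

/-- Barrier computation for the Hopf-type lemma in the flat model: for
`W = y^{-a}(y+Ay²)(e^{-B|x|}-e^{-Br₀})` on
`Ω = {r₀/2 < |x| < r₀, 0 < y < r₀}` and `a ∈ (-1,0]`, the degenerate divergence
`div(y^a∇W) = ∂_y(y^a∂_yW) + y^aΔ_xW` equals
`(2-a)A(e^{-B|x|}-e^{-Br₀}) + (y+Ay²)(B²-(n-1)B/|x|)e^{-B|x|}`; in particular it
is `≥ 0` on `Ω` for `A, B` sufficiently large, i.e. `W` is a subsolution. -/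
theorem stmt15 (n : ℕ) (hn : 1 ≤ n) (a : ℝ) (ha : a ∈ Set.Ioc (-1 : ℝ) 0)
    (r₀ : ℝ) (hr : 0 < r₀)
    (W : ℝ → ℝ → EuclideanSpace ℝ (Fin n) → ℝ → ℝ)
    (hW : ∀ A B x y, W A B x y
      = y ^ (-a) * (y + A * y ^ 2) * (Real.exp (-B * ‖x‖) - Real.exp (-B * r₀))) :
    (∀ A B (x : EuclideanSpace ℝ (Fin n)) (y : ℝ),
      r₀ / 2 < ‖x‖ → ‖x‖ < r₀ → 0 < y → y < r₀ →
      deriv (fun t => t ^ a * deriv (fun s => W A B x s) t) y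
        + y ^ a * (∑ i : Fin n,
            fderiv ℝ (fun z => fderiv ℝ (fun z' => W A B z' y) z (EuclideanSpace.single i 1))
              x (EuclideanSpace.single i 1))
      = (2 - a) * A * (Real.exp (-B * ‖x‖) - Real.exp (-B * r₀))
        + (y + A * y ^ 2) * (B ^ 2 - ((n : ℝ) - 1) * B / ‖x‖) * Real.exp (-B * ‖x‖)) ∧
    (∃ A₀ B₀ : ℝ, 0 < A₀ ∧ 0 < B₀ ∧
      ∀ A B (x : EuclideanSpace ℝ (Fin n)) (y : ℝ), A₀ ≤ A → B₀ ≤ B →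
        r₀ / 2 < ‖x‖ → ‖x‖ < r₀ → 0 < y → y < r₀ →
        0 ≤ deriv (fun t => t ^ a * deriv (fun s => W A B x s) t) y
          + y ^ a * (∑ i : Fin n,
              fderiv ℝ (fun z => fderiv ℝ (fun z' => W A B z' y) z (EuclideanSpace.single i 1))
                x (EuclideanSpace.single i 1))) := by
  obtain ⟨ha1, ha2⟩ := ha
  have hn' : (1 : ℝ) ≤ n := by exact_mod_cast hn
  have key : ∀ A B (x : EuclideanSpace ℝ (Fin n)) (y : ℝ),
      r₀ / 2 < ‖x‖ → ‖x‖ < r₀ → 0 < y → y < r₀ →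
      deriv (fun t => t ^ a * deriv (fun s => W A B x s) t) y
        + y ^ a * (∑ i : Fin n,
            fderiv ℝ (fun z => fderiv ℝ (fun z' => W A B z' y) z (EuclideanSpace.single i 1))
              x (EuclideanSpace.single i 1))
      = (2 - a) * A * (Real.exp (-B * ‖x‖) - Real.exp (-B * r₀))
        + (y + A * y ^ 2) * (B ^ 2 - ((n : ℝ) - 1) * B / ‖x‖) * Real.exp (-B * ‖x‖) := by
    intro A B x y hx1 hx2 hy1 hy2
    have hr2 : (0 : ℝ) < r₀ / 2 := by linarith
    have hrx : 0 < ‖x‖ := lt_trans hr2 hx1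
    have hxne : x ≠ 0 := norm_pos_iff.mp hrx
    have hrne : ‖x‖ ≠ 0 := hrx.ne'
    set e : ℝ := Real.exp (-B * ‖x‖) with he
    set c : ℝ := y ^ (-a) * (y + A * y ^ 2) with hc
    -- the y-part
    have hYfun : (fun s : ℝ => W A B x s)
        = fun s : ℝ => s ^ (-a) * (s + A * s ^ 2) * (e - Real.exp (-B * r₀)) :=
      funext fun s => hW A B x s
    have hY : deriv (fun t => t ^ a * deriv (fun s => W A B x s) t) y
        = (2 - a) * A * (e - Real.exp (-B * r₀)) := by
      rw [hYfun]; exact myYpart a A _ y hy1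
    -- the x-part
    have hXi : ∀ i : Fin n,
        fderiv ℝ (fun z => fderiv ℝ (fun z' => W A B z' y) z (EuclideanSpace.single i 1))
            x (EuclideanSpace.single i 1)
          = c * ((B ^ 2 * e * (‖x‖⁻¹) ^ 2 + B * e * (‖x‖⁻¹) ^ 3) * (x i) ^ 2
              - B * e * ‖x‖⁻¹) := by
      intro i
      have hfun : (fun z => fderiv ℝ (fun z' => W A B z' y) z (EuclideanSpace.single i 1))
          = fun z => fderiv ℝ
              (fun z' : EuclideanSpace ℝ (Fin n) =>
                c * Real.exp (-B * ‖z'‖) - c * Real.exp (-B * r₀)) z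
              (EuclideanSpace.single i 1) := by
        funext z
        have hfe : (fun z' : EuclideanSpace ℝ (Fin n) => W A B z' y)
            = fun z' : EuclideanSpace ℝ (Fin n) =>
                c * Real.exp (-B * ‖z'‖) - c * Real.exp (-B * r₀) := by
          funext z'
          rw [hW, hc]
          ring
        rw [hfe]
      rw [hfun]
      exact myXpart n B c (Real.exp (-B * r₀)) hxne i
    have hnormsq : ∑ i : Fin n, (x i) ^ 2 = ‖x‖ ^ 2 := by
      have h := real_inner_self_eq_norm_sq x
      rw [PiLp.inner_apply] at h
      simpa [pow_two] using h
    have hsum : (∑ i : Fin n,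
          fderiv ℝ (fun z => fderiv ℝ (fun z' => W A B z' y) z (EuclideanSpace.single i 1))
            x (EuclideanSpace.single i 1))
        = c * ((B ^ 2 * e * (‖x‖⁻¹) ^ 2 + B * e * (‖x‖⁻¹) ^ 3) * ‖x‖ ^ 2
            - (n : ℝ) * (B * e * ‖x‖⁻¹)) := by
      rw [Finset.sum_congr rfl fun i _ => hXi i]
      have expand : ∀ i : Fin n,
          c * ((B ^ 2 * e * (‖x‖⁻¹) ^ 2 + B * e * (‖x‖⁻¹) ^ 3) * (x i) ^ 2 - B * e * ‖x‖⁻¹)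
          = c * (B ^ 2 * e * (‖x‖⁻¹) ^ 2 + B * e * (‖x‖⁻¹) ^ 3) * (x i) ^ 2
            - c * (B * e * ‖x‖⁻¹) := fun i => by ring
      rw [Finset.sum_congr rfl fun i _ => expand i, Finset.sum_sub_distrib, ← Finset.mul_sum,
        hnormsq, Finset.sum_const, Finset.card_univ, Fintype.card_fin, nsmul_eq_mul]
      ring
    rw [hY, hsum]
    have hya : y ^ a * y ^ (-a) = 1 := by
      rw [← Real.rpow_add hy1]; simp
    have hstep : y ^ a * (c * ((B ^ 2 * e * (‖x‖⁻¹) ^ 2 + B * e * (‖x‖⁻¹) ^ 3) * ‖x‖ ^ 2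
            - (n : ℝ) * (B * e * ‖x‖⁻¹)))
        = (y + A * y ^ 2) * (B ^ 2 - ((n : ℝ) - 1) * B / ‖x‖) * e := by
      have h1 : y ^ a * (c * ((B ^ 2 * e * (‖x‖⁻¹) ^ 2 + B * e * (‖x‖⁻¹) ^ 3) * ‖x‖ ^ 2
            - (n : ℝ) * (B * e * ‖x‖⁻¹)))
          = (y ^ a * y ^ (-a)) * ((y + A * y ^ 2)
              * ((B ^ 2 * e * (‖x‖⁻¹) ^ 2 + B * e * (‖x‖⁻¹) ^ 3) * ‖x‖ ^ 2
                - (n : ℝ) * (B * e * ‖x‖⁻¹))) := by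
        rw [hc]; ring
      rw [h1, hya, one_mul]
      field_simp
      ring
    rw [hstep]
  refine ⟨key, 1, 2 * n / r₀, one_pos, ?_, ?_⟩
  · have : (0 : ℝ) < 2 * n := by linarith
    exact div_pos this hr
  · intro A B x y hA hB hx1 hx2 hy1 hy2
    rw [key A B x y hx1 hx2 hy1 hy2]
    have hr2 : (0 : ℝ) < r₀ / 2 := by linarith
    have hrx : 0 < ‖x‖ := lt_trans hr2 hx1
    have hB0 : 0 < B := by
      have h2n : (0 : ℝ) < 2 * n / r₀ := div_pos (by linarith) hr
      linarith
    apply add_nonneg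
    · apply mul_nonneg (mul_nonneg (by linarith) (by linarith))
      rw [sub_nonneg]
      apply Real.exp_le_exp.mpr
      nlinarith
    · apply mul_nonneg (mul_nonneg (by nlinarith) ?_) (Real.exp_nonneg _)
      rw [sub_nonneg, div_le_iff₀ hrx]
      have hBr : (n : ℝ) ≤ B * ‖x‖ := by
        have h1 : (2 * n / r₀) * (r₀ / 2) ≤ B * ‖x‖ :=
          mul_le_mul hB hx1.le hr2.le hB0.le
        have h2 : (2 * n / r₀) * (r₀ / 2) = (n : ℝ) := by field_simp
        linarith
      nlinarith
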